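/- Under the hypotheses of the MTLS theorem — C_a ∈ ℝ^{M×n₁}, C_b ∈ ℝ^{M×n₂}, D ∈ ℝ^{M×d} with M ≥ n₁+n₂+d; Q = [Q₁, Q₂] orthogonal (Q₁ ∈ ℝ^{M×n₁}, Q₂ ∈ ℝ^{M×(M−n₁)}) with Qᵀ[C_a, C_b, D] = [[R₁₁, R₁₂, R₁d], [0, R₂₂, R₂d]] and R₁₁ ∈ ℝ^{n₁×n₁} invertible; [R₂₂, R₂d] = UΣVᵀ a singular value decomposition with singular values σ₁ ≥ … ≥ σ_{n₂+d} > 0, σ_{n₂} > σ_{n₂+1}, V = [[V₁₁, V₁₂], [V₂₁, V₂₂]] with V₂₂ ∈ ℝ^{d×d} invertible, and U₁ the first n₂ columns of U, Σ₁ = diag(σ₁, …, σ_{n₂}) — define R̃₂₂ = U₁Σ₁V₁₁ᵀ, R̃₂d = U₁Σ₁V₂₁ᵀ, C̃_b = Q₁R₁₂ + Q₂R̃₂₂, and D̃ = Q₁R₁d + Q₂R̃₂d. Then the corrected system is compatible with the MTLS solution: C_a X_a + C̃_b X_b = D̃, where X_b = −V₁₂V₂₂⁻¹ and X_a = R₁₁⁻¹(R₁d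 − R₁₂X_b); moreover the perturbation satisfies ‖[C̃_b − C_b, D̃ − D]‖_F = (σ_{n₂+1}² + … + σ_{n₂+d}²)^{1/2}. -/

import Mathlib

open Matrix

/-- The Frobenius norm of a real matrix. -/
noncomputable def frob {α β : Type*} [Fintype α] [Fintype β] (M : Matrix α β ℝ) : ℝ :=
  Real.sqrt (∑ i, ∑ j, M i j ^ 2)

/-- `X = [X_a; X_b]` is a real MTLS solution for data `C_a, C_b, D`: there exist
perturbations `Ẽ_b, G̃` with `C_a X_a + (C_b + Ẽ_b) X_b = D + G̃` attaining the minimum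
of `‖[Ẽ_b, G̃]‖_F` among all feasible triples `(X', Ẽ_b', G̃')`. -/
def IsMTLSSol {M n₁ n₂ d : ℕ}
    (Ca : Matrix (Fin M) (Fin n₁) ℝ) (Cb : Matrix (Fin M) (Fin n₂) ℝ)
    (D : Matrix (Fin M) (Fin d) ℝ) (X : Matrix (Fin n₁ ⊕ Fin n₂) (Fin d) ℝ) : Prop :=
  ∃ (E : Matrix (Fin M) (Fin n₂) ℝ) (G : Matrix (Fin M) (Fin d) ℝ),
    fromCols Ca (Cb + E) * X = D + G ∧
    ∀ (E' : Matrix (Fin M) (Fin n₂) ℝ) (G' : Matrix (Fin M) (Fin d) ℝ)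
      (X' : Matrix (Fin n₁ ⊕ Fin n₂) (Fin d) ℝ),
      fromCols Ca (Cb + E') * X' = D + G' →
        frob (fromCols E G) ≤ frob (fromCols E' G')


lemma frob_eq_sqrt_trace {α β : Type*} [Fintype α] [Fintype β] (A : Matrix α β ℝ) :
    frob A = Real.sqrt (Aᵀ * A).trace := by
  unfold frob
  congr 1
  rw [Finset.sum_comm]
  simp [Matrix.trace, Matrix.mul_apply, sq, Matrix.diag]

lemma frob_mul_left {α β γ : Type*} [Fintype α] [Fintype β] [Fintype γ] [DecidableEq β]
    (Q : Matrix α β ℝ) (A : Matrix β γ ℝ) (hQ : Qᵀ * Q = 1) :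
    frob (Q * A) = frob A := by
  rw [frob_eq_sqrt_trace, frob_eq_sqrt_trace, Matrix.transpose_mul,
    Matrix.mul_assoc, ← Matrix.mul_assoc Qᵀ, hQ, Matrix.one_mul]

lemma frob_mul_right {α β γ : Type*} [Fintype α] [Fintype β] [Fintype γ] [DecidableEq β]
    (A : Matrix α β ℝ) (V : Matrix γ β ℝ) (hV : Vᵀ * V = 1) :
    frob (A * Vᵀ) = frob A := by
  rw [frob_eq_sqrt_trace, frob_eq_sqrt_trace, Matrix.transpose_mul,
    Matrix.transpose_transpose, Matrix.mul_assoc, Matrix.trace_mul_comm,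
    Matrix.mul_assoc, Matrix.mul_assoc, hV, Matrix.mul_one]

lemma frob_neg {α β : Type*} [Fintype α] [Fintype β] (A : Matrix α β ℝ) :
    frob (-A) = frob A := by
  unfold frob; simp

lemma fromColumns_add' {m n₁ n₂ : Type*} (A B : Matrix m n₁ ℝ) (C D : Matrix m n₂ ℝ) :
    fromCols A C + fromCols B D = fromCols (A + B) (C + D) := by
  ext i j; cases j <;> simp

lemma fromColumns_sub' {m n₁ n₂ : Type*} (A B : Matrix m n₁ ℝ) (C D : Matrix m n₂ ℝ) :
    fromCols (A - B) (C - D) = fromCols A C - fromCols B D := by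
  ext i j; cases j <;> simp

/-- under the hypotheses of the MTLS theorem, with `Q = [Q₁, Q₂]`,
`U₁` the first `n₂` columns of `U`, `S₁ = diag(σ₁, …, σ_{n₂})`, `R̃₂₂ = U₁S₁V₁₁ᵀ`,
`R̃₂d = U₁S₁V₂₁ᵀ`, `C̃_b = Q₁R₁₂ + Q₂R̃₂₂` and `D̃ = Q₁R₁d + Q₂R̃₂d`, the corrected
system is compatible with the MTLS solution: `C_a X_a + C̃_b X_b = D̃` for
`X_b = −V₁₂V₂₂⁻¹`, `X_a = R₁₁⁻¹(R₁d − R₁₂X_b)`, and the perturbation satisfies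
`‖[C̃_b − C_b, D̃ − D]‖_F = (σ_{n₂+1}² + … + σ_{n₂+d}²)^{1/2}`. -/
theorem mtls_corrected_system {M n₁ n₂ d : ℕ} (hn₁ : 0 < n₁) (hn₂ : 0 < n₂) (hd : 0 < d)
    (hM : n₁ + n₂ + d ≤ M)
    (Ca : Matrix (Fin M) (Fin n₁) ℝ) (Cb : Matrix (Fin M) (Fin n₂) ℝ)
    (D : Matrix (Fin M) (Fin d) ℝ)
    (Q : Matrix (Fin M) (Fin n₁ ⊕ Fin (M - n₁)) ℝ)
    (hQ : Qᵀ * Q = 1) (hQ' : Q * Qᵀ = 1)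
    (R₁₁ : Matrix (Fin n₁) (Fin n₁) ℝ) (R₁₂ : Matrix (Fin n₁) (Fin n₂) ℝ)
    (R₁d : Matrix (Fin n₁) (Fin d) ℝ)
    (R₂₂ : Matrix (Fin (M - n₁)) (Fin n₂) ℝ) (R₂d : Matrix (Fin (M - n₁)) (Fin d) ℝ)
    (hR₁₁ : IsUnit R₁₁.det)
    (hQR : Qᵀ * fromCols (fromCols Ca Cb) D =
      fromBlocks (fromCols R₁₁ R₁₂) R₁d (fromCols 0 R₂₂) R₂d)
    (U : Matrix (Fin (M - n₁)) (Fin (M - n₁)) ℝ) (hU : Uᵀ * U = 1)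
    (V₁₁ : Matrix (Fin n₂) (Fin n₂) ℝ) (V₁₂ : Matrix (Fin n₂) (Fin d) ℝ)
    (V₂₁ : Matrix (Fin d) (Fin n₂) ℝ) (V₂₂ : Matrix (Fin d) (Fin d) ℝ)
    (hV : (fromBlocks V₁₁ V₁₂ V₂₁ V₂₂)ᵀ * fromBlocks V₁₁ V₁₂ V₂₁ V₂₂ = 1)
    (σ : Fin (n₂ + d) → ℝ) (hσpos : ∀ i, 0 < σ i) (hσdec : Antitone σ)
    (hSVD : fromCols R₂₂ R₂d =
      U * (Matrix.of fun (i : Fin (M - n₁)) (j : Fin n₂ ⊕ Fin d) =>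
            if (i : ℕ) = ((finSumFinEquiv j : Fin (n₂ + d)) : ℕ)
            then σ (finSumFinEquiv j) else 0) *
        (fromBlocks V₁₁ V₁₂ V₂₁ V₂₂)ᵀ)
    (hgap : σ ⟨n₂, by omega⟩ < σ ⟨n₂ - 1, by omega⟩)
    (hV₂₂ : IsUnit V₂₂.det) :
    let Q₁ : Matrix (Fin M) (Fin n₁) ℝ := Matrix.of fun i j => Q i (Sum.inl j)
    let Q₂ : Matrix (Fin M) (Fin (M - n₁)) ℝ := Matrix.of fun i j => Q i (Sum.inr j)
    let U₁ : Matrix (Fin (M - n₁)) (Fin n₂) ℝ :=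
      Matrix.of fun i (j : Fin n₂) => U i ⟨(j : ℕ), by omega⟩
    let S₁ : Matrix (Fin n₂) (Fin n₂) ℝ :=
      Matrix.diagonal fun j : Fin n₂ => σ ⟨(j : ℕ), by omega⟩
    let Rt₂₂ : Matrix (Fin (M - n₁)) (Fin n₂) ℝ := U₁ * S₁ * V₁₁ᵀ
    let Rt₂d : Matrix (Fin (M - n₁)) (Fin d) ℝ := U₁ * S₁ * V₂₁ᵀ
    let Ctb : Matrix (Fin M) (Fin n₂) ℝ := Q₁ * R₁₂ + Q₂ * Rt₂₂
    let Dt : Matrix (Fin M) (Fin d) ℝ := Q₁ * R₁d + Q₂ * Rt₂d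
    let Xb : Matrix (Fin n₂) (Fin d) ℝ := -(V₁₂ * V₂₂⁻¹)
    let Xa : Matrix (Fin n₁) (Fin d) ℝ := R₁₁⁻¹ * (R₁d - R₁₂ * Xb)
    Ca * Xa + Ctb * Xb = Dt ∧
    frob (fromCols (Ctb - Cb) (Dt - D)) =
      Real.sqrt (∑ i ∈ Finset.univ.filter (fun i : Fin (n₂ + d) => n₂ ≤ (i : ℕ)),
        σ i ^ 2) := by
  intro Q₁ Q₂ U₁ S₁ Rt₂₂ Rt₂d Ctb Dt Xb Xa
  have hdim : n₂ + d ≤ M - n₁ := by omega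
  -- Q decomposition
  have hQdecomp : Q = fromCols Q₁ Q₂ := by
    ext i j; cases j <;> rfl
  -- orthogonality blocks of Q
  have hQmul : fromBlocks (Q₁ᵀ * Q₁) (Q₁ᵀ * Q₂) (Q₂ᵀ * Q₁) (Q₂ᵀ * Q₂) =
      fromBlocks 1 0 0 1 := by
    rw [← fromRows_mul_fromCols, ← transpose_fromCols, ← hQdecomp, hQ,
      Matrix.fromBlocks_one]
  have hQ22 : Q₂ᵀ * Q₂ = 1 := by
    have h := congrArg Matrix.toBlocks₂₂ hQmul
    rwa [Matrix.toBlocks_fromBlocks₂₂, Matrix.toBlocks_fromBlocks₂₂] at h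
  -- decomposition of the data
  have key := congrArg (fun A => Q * A) hQR
  simp only [← Matrix.mul_assoc, hQ', Matrix.one_mul] at key
  rw [hQdecomp, fromCols_mul_fromBlocks, mul_fromCols, mul_fromCols,
    Matrix.mul_zero, fromColumns_add'] at key
  obtain ⟨h1, hD⟩ := (fromCols_ext_iff _ _ _ _).mp key
  obtain ⟨hCa, hCb⟩ := (fromCols_ext_iff _ _ _ _).mp h1
  rw [add_zero] at hCa
  -- V block relation
  have hVmul : fromBlocks (V₁₁ᵀ * V₁₁ + V₂₁ᵀ * V₂₁) (V₁₁ᵀ * V₁₂ + V₂₁ᵀ * V₂₂)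
      (V₁₂ᵀ * V₁₁ + V₂₂ᵀ * V₂₁) (V₁₂ᵀ * V₁₂ + V₂₂ᵀ * V₂₂) = fromBlocks 1 0 0 1 := by
    rw [← Matrix.fromBlocks_multiply, ← Matrix.fromBlocks_transpose, hV,
      Matrix.fromBlocks_one]
  have hV12 : V₁₁ᵀ * V₁₂ + V₂₁ᵀ * V₂₂ = 0 := by
    have h := congrArg Matrix.toBlocks₁₂ hVmul
    rwa [Matrix.toBlocks_fromBlocks₁₂, Matrix.toBlocks_fromBlocks₁₂] at h
  have hXbkey : V₁₁ᵀ * Xb = V₂₁ᵀ := by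
    have h2 : V₁₁ᵀ * V₁₂ = -(V₂₁ᵀ * V₂₂) := by
      rw [← add_eq_zero_iff_eq_neg]; exact hV12
    show V₁₁ᵀ * -(V₁₂ * V₂₂⁻¹) = V₂₁ᵀ
    rw [Matrix.mul_neg, ← Matrix.mul_assoc, h2, Matrix.neg_mul, neg_neg,
      Matrix.mul_assoc, Matrix.mul_nonsing_inv _ hV₂₂, Matrix.mul_one]
  constructor
  · -- part 1
    have hCaXa : Ca * Xa = Q₁ * (R₁d - R₁₂ * Xb) := by
      show Ca * (R₁₁⁻¹ * (R₁d - R₁₂ * Xb)) = _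
      rw [hCa, Matrix.mul_assoc, ← Matrix.mul_assoc R₁₁,
        Matrix.mul_nonsing_inv _ hR₁₁, Matrix.one_mul]
    have hRtXb : Rt₂₂ * Xb = Rt₂d := by
      show U₁ * S₁ * V₁₁ᵀ * Xb = U₁ * S₁ * V₂₁ᵀ
      rw [Matrix.mul_assoc, hXbkey]
    show Ca * Xa + Ctb * Xb = Dt
    rw [hCaXa]
    show Q₁ * (R₁d - R₁₂ * Xb) + (Q₁ * R₁₂ + Q₂ * Rt₂₂) * Xb = Q₁ * R₁d + Q₂ * Rt₂d
    rw [Matrix.add_mul, Matrix.mul_sub, Matrix.mul_assoc, Matrix.mul_assoc, hRtXb]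
    abel
  · -- part 2
    have hn2M : n₂ ≤ M - n₁ := by omega
    have hidx : ∀ k : Fin (n₂ + d), (k : ℕ) < M - n₁ := fun k =>
      lt_of_lt_of_le k.isLt hdim
    set P₁ : Matrix (Fin (M - n₁)) (Fin n₂) ℝ :=
      Matrix.of fun i j => if (i : ℕ) = (j : ℕ) then σ (Fin.castAdd d j) else 0 with hP₁def
    set Sig2 : Matrix (Fin (M - n₁)) (Fin n₂ ⊕ Fin d) ℝ :=
      Matrix.of fun i k => if (i : ℕ) = ((finSumFinEquiv k : Fin (n₂ + d)) : ℕ) ∧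
        n₂ ≤ ((finSumFinEquiv k : Fin (n₂ + d)) : ℕ) then σ (finSumFinEquiv k) else 0
      with hSig2def
    have hCtbCb : Ctb - Cb = Q₂ * (Rt₂₂ - R₂₂) := by
      rw [hCb]
      show Q₁ * R₁₂ + Q₂ * Rt₂₂ - (Q₁ * R₁₂ + Q₂ * R₂₂) = Q₂ * (Rt₂₂ - R₂₂)
      rw [Matrix.mul_sub]; abel
    have hDtD : Dt - D = Q₂ * (Rt₂d - R₂d) := by
      rw [hD]
      show Q₁ * R₁d + Q₂ * Rt₂d - (Q₁ * R₁d + Q₂ * R₂d) = Q₂ * (Rt₂d - R₂d)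
      rw [Matrix.mul_sub]; abel
    have hsplit : (Matrix.of fun (i : Fin (M - n₁)) (j : Fin n₂ ⊕ Fin d) =>
        if (i : ℕ) = ((finSumFinEquiv j : Fin (n₂ + d)) : ℕ)
        then σ (finSumFinEquiv j) else 0) = fromCols P₁ 0 + Sig2 := by
      ext i k
      cases k with
      | inl j =>
        have hjlt : ¬ (n₂ ≤ (j : ℕ)) := by have := j.isLt; omega
        simp [hP₁def, hSig2def, hjlt]
        congr 1
      | inr j =>
        simp [hP₁def, hSig2def, Nat.le_add_right]
        congr 1
    have hVtdecomp : (fromBlocks V₁₁ V₁₂ V₂₁ V₂₂)ᵀ =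
        fromRows (fromCols V₁₁ᵀ V₂₁ᵀ) (fromCols V₁₂ᵀ V₂₂ᵀ) := by
      rw [Matrix.fromBlocks_transpose, ← fromRows_fromCols_eq_fromBlocks]
    have hS : S₁ = Matrix.diagonal (fun j : Fin n₂ => σ (Fin.castAdd d j)) := rfl
    have hU₁ : U₁ = Matrix.of (fun i (j : Fin n₂) => U i (Fin.castLE hn2M j)) := rfl
    have hUP : U * P₁ = U₁ * S₁ := by
      ext i j
      rw [hS, Matrix.mul_diagonal, Matrix.mul_apply]
      rw [Finset.sum_eq_single (Fin.castLE hn2M j)]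
      · rw [hU₁]; simp [hP₁def]
      · intro b _ hb
        have hne : ¬ ((b : ℕ) = (j : ℕ)) := fun h => hb (Fin.ext h)
        simp [hP₁def, hne]
      · intro h; exact absurd (Finset.mem_univ _) h
    have hRtfact : fromCols Rt₂₂ Rt₂d =
        U * (fromCols P₁ (0 : Matrix (Fin (M - n₁)) (Fin d) ℝ) * (fromBlocks V₁₁ V₁₂ V₂₁ V₂₂)ᵀ) := by
      rw [hVtdecomp, fromCols_mul_fromRows, Matrix.zero_mul, add_zero,
        ← Matrix.mul_assoc, hUP]
      show fromCols (U₁ * S₁ * V₁₁ᵀ) (U₁ * S₁ * V₂₁ᵀ) =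
        U₁ * S₁ * fromCols V₁₁ᵀ V₂₁ᵀ
      rw [mul_fromCols]
    have hdiff : fromCols Rt₂₂ Rt₂d - fromCols R₂₂ R₂d =
        -(U * (Sig2 * (fromBlocks V₁₁ V₁₂ V₂₁ V₂₂)ᵀ)) := by
      rw [hRtfact, hSVD, hsplit]
      simp only [Matrix.mul_add, Matrix.add_mul, Matrix.mul_assoc]
      abel
    rw [hCtbCb, hDtD, ← mul_fromCols, frob_mul_left _ _ hQ22, fromColumns_sub',
      hdiff, frob_neg, frob_mul_left _ _ hU, frob_mul_right _ _ hV]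
    unfold frob
    congr 1
    rw [Finset.sum_comm, Finset.sum_filter,
      ← Equiv.sum_comp finSumFinEquiv (fun j : Fin (n₂ + d) =>
        if n₂ ≤ (j : ℕ) then σ j ^ 2 else 0)]
    apply Finset.sum_congr rfl
    intro k _
    by_cases hk : n₂ ≤ ((finSumFinEquiv k : Fin (n₂ + d)) : ℕ)
    · rw [if_pos hk]
      rw [Finset.sum_eq_single
        (⟨((finSumFinEquiv k : Fin (n₂ + d)) : ℕ), hidx _⟩ : Fin (M - n₁))]
      · simp [hSig2def, hk]
      · intro b _ hb
        have hne : ¬ ((b : ℕ) = ((finSumFinEquiv k : Fin (n₂ + d)) : ℕ)) :=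
          fun h => hb (Fin.ext h)
        simp [hSig2def, hne]
      · intro h; exact absurd (Finset.mem_univ _) h
    · rw [if_neg hk]
      apply Finset.sum_eq_zero
      intro b _
      simp [hSig2def, hk]
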